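/- For a Cauchy random variable X ~ C(a,γ) with a ≠ 0 or γ ≠ 1, the expectation of Z = X/(1+X²) equals a(a² + γ² + 1 - 2γ) / ((a² + γ² + 1)² - 4γ²); for (a,γ) = (0,1) the expectation is 0. -/

import Mathlib

open MeasureTheory Real Topology

noncomputable def cauchyPDF (a γ x : ℝ) : ℝ :=
  (1 / (π * γ)) * (γ ^ 2 / ((x - a) ^ 2 + γ ^ 2))

open Filter

private lemma inv_tendsto_atBot_zero' : Tendsto (fun x : ℝ => x⁻¹) atBot (𝓝 0) := by
  have h := (tendsto_inv_atTop_zero (𝕜 := ℝ)).comp tendsto_neg_atBot_atTop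
  have h2 := h.neg
  simp only [Function.comp] at h2
  simpa [inv_neg] using h2

private lemma ratio_tendsto_one (a γ : ℝ) (hγ : 0 < γ) {l : Filter ℝ}
    (hinv : Tendsto (fun x : ℝ => x⁻¹) l (𝓝 0)) (h0 : ∀ᶠ x in l, x ≠ 0) :
    Tendsto (fun x : ℝ => (1 + x ^ 2) / ((x - a) ^ 2 + γ ^ 2)) l (𝓝 1) := by
  have hnum : Tendsto (fun x : ℝ => x⁻¹ ^ 2 + 1) l (𝓝 1) := by
    simpa using (hinv.pow 2).add_const 1
  have hden : Tendsto (fun x : ℝ => (1 - a * x⁻¹) ^ 2 + (γ * x⁻¹) ^ 2) l (𝓝 1) := by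
    have h1 : Tendsto (fun x : ℝ => 1 - a * x⁻¹) l (𝓝 1) := by
      simpa using (hinv.const_mul a).const_sub 1
    have h2 : Tendsto (fun x : ℝ => γ * x⁻¹) l (𝓝 0) := by
      simpa using hinv.const_mul γ
    simpa using (h1.pow 2).add (h2.pow 2)
  have h := hnum.div hden one_ne_zero
  rw [show (1 : ℝ) / 1 = 1 by norm_num] at h
  refine h.congr' ?_
  filter_upwards [h0] with x hx
  have hd2 : (0 : ℝ) < (x - a) ^ 2 + γ ^ 2 := by positivity
  have hxi : x⁻¹ ≠ 0 := inv_ne_zero hx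
  have hxi2 : (0 : ℝ) < x⁻¹ ^ 2 := (sq_nonneg _).lt_of_ne' (pow_ne_zero 2 hxi)
  have hrw : (1 - a * x⁻¹) ^ 2 + (γ * x⁻¹) ^ 2 = ((x - a) ^ 2 + γ ^ 2) * x⁻¹ ^ 2 := by
    field_simp
  have hne : (1 - a * x⁻¹) ^ 2 + (γ * x⁻¹) ^ 2 ≠ 0 := by
    rw [hrw]; exact (mul_pos hd2 hxi2).ne'
  simp only [Pi.div_apply]
  rw [div_eq_div_iff hne hd2.ne']
  field_simp

set_option maxHeartbeats 2000000 in
private lemma cauchy_aux (a γ : ℝ) (hγ : 0 < γ)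
    (hQ : 0 < (a ^ 2 + γ ^ 2 + 1) ^ 2 - 4 * γ ^ 2) :
    ∫ x : ℝ, (x / (1 + x ^ 2)) * cauchyPDF a γ x =
      a * (a ^ 2 + γ ^ 2 + 1 - 2 * γ) / ((a ^ 2 + γ ^ 2 + 1) ^ 2 - 4 * γ ^ 2) := by
  have hπ : (π : ℝ) ≠ 0 := pi_ne_zero
  have hγ' : γ ≠ 0 := hγ.ne'
  have hQ' : (a ^ 2 + γ ^ 2 + 1) ^ 2 - 4 * γ ^ 2 ≠ 0 := hQ.ne'
  set Q : ℝ := (a ^ 2 + γ ^ 2 + 1) ^ 2 - 4 * γ ^ 2 with hQdef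
  set A : ℝ := (a ^ 2 + γ ^ 2 - 1) / Q with hA
  set B : ℝ := (-2 * a) / Q with hB
  set D : ℝ := a * (a ^ 2 + γ ^ 2 + 1) / Q with hD
  set F : ℝ → ℝ := fun x => (γ / π) *
      (A / 2 * Real.log ((1 + x ^ 2) / ((x - a) ^ 2 + γ ^ 2)) +
        B * arctan x + (D / γ) * arctan ((x - a) / γ)) with hF
  -- derivative
  have hderiv : ∀ x : ℝ, HasDerivAt F ((x / (1 + x ^ 2)) * cauchyPDF a γ x) x := by
    intro x
    have h1x : (0 : ℝ) < 1 + x ^ 2 := by positivity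
    have h2x : (0 : ℝ) < (x - a) ^ 2 + γ ^ 2 := by positivity
    have hu : HasDerivAt (fun y : ℝ => 1 + y ^ 2) (2 * x) x := by
      simpa using (hasDerivAt_pow 2 x).const_add 1
    have hv : HasDerivAt (fun y : ℝ => (y - a) ^ 2 + γ ^ 2) (2 * (x - a)) x := by
      have h := (((hasDerivAt_id x).sub_const a).pow 2).add_const (γ ^ 2)
      simpa using h
    have hq := hu.div hv h2x.ne'
    have hlog := hq.log (div_pos h1x h2x).ne'
    have ha1 : HasDerivAt (fun y : ℝ => arctan y) (1 / (1 + x ^ 2)) x := hasDerivAt_arctan x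
    have haff : HasDerivAt (fun y : ℝ => (y - a) / γ) (1 / γ) x := by
      simpa using ((hasDerivAt_id x).sub_const a).div_const γ
    have ha2 : HasDerivAt (fun y : ℝ => arctan ((y - a) / γ))
        ((1 / (1 + ((x - a) / γ) ^ 2)) * (1 / γ)) x :=
      by have h := (Real.hasDerivAt_arctan ((x - a) / γ)).comp x haff; exact h
    have hsum := ((HasDerivAt.const_mul (A / 2) hlog).add
        (HasDerivAt.const_mul B ha1)).add (HasDerivAt.const_mul (D / γ) ha2)
    have hFd := HasDerivAt.const_mul (γ / π) hsum
    refine hFd.congr_deriv ?_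
    rw [hA, hB, hD]
    simp only [cauchyPDF, Pi.div_apply]
    have hgd : (1 + ((x - a) / γ) ^ 2) ≠ 0 := by
      have : (0:ℝ) < 1 + ((x - a) / γ) ^ 2 := by positivity
      exact this.ne'
    field_simp
    rw [hQdef]
    ring
  -- integrability
  have hcont : Continuous (fun x : ℝ => (x / (1 + x ^ 2)) * cauchyPDF a γ x) := by
    apply Continuous.mul
    · exact continuous_id.div (by continuity) fun x => by positivity
    · show Continuous fun x : ℝ => (1 / (π * γ)) * (γ ^ 2 / ((x - a) ^ 2 + γ ^ 2))
      exact continuous_const.mul (continuous_const.div (by continuity) fun x => by positivity)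
  have hbound : Integrable (fun x : ℝ => γ / (2 * π) * ((x - a) ^ 2 + γ ^ 2)⁻¹) := by
    have h1 : Integrable (fun x : ℝ => (1 + (x / γ) ^ 2)⁻¹) :=
      integrable_inv_one_add_sq.comp_div hγ'
    have h2 := h1.comp_sub_right a
    refine (h2.const_mul (γ / (2 * π) / γ ^ 2)).congr
      (Filter.Eventually.of_forall fun x => ?_)
    have h2x : (0 : ℝ) < (x - a) ^ 2 + γ ^ 2 := by positivity
    field_simp
    ring
  have hint : Integrable (fun x : ℝ => (x / (1 + x ^ 2)) * cauchyPDF a γ x) := by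
    refine hbound.mono hcont.aestronglyMeasurable (Filter.Eventually.of_forall fun x => ?_)
    have h1x : (0 : ℝ) < 1 + x ^ 2 := by positivity
    have h2x : (0 : ℝ) < (x - a) ^ 2 + γ ^ 2 := by positivity
    have hpdf : 0 ≤ cauchyPDF a γ x := by
      simp only [cauchyPDF]; positivity
    rw [Real.norm_eq_abs, Real.norm_eq_abs, abs_mul, abs_of_nonneg hpdf]
    have habs : |x / (1 + x ^ 2)| ≤ 1 / 2 := by
      rw [abs_div, abs_of_pos h1x, div_le_div_iff₀ h1x two_pos]
      nlinarith [sq_nonneg (|x| - 1), sq_abs x]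
    calc |x / (1 + x ^ 2)| * cauchyPDF a γ x ≤ 1 / 2 * cauchyPDF a γ x :=
          mul_le_mul_of_nonneg_right habs hpdf
      _ = |γ / (2 * π) * ((x - a) ^ 2 + γ ^ 2)⁻¹| := by
          have hval : (0:ℝ) ≤ γ / (2 * π) * ((x - a) ^ 2 + γ ^ 2)⁻¹ := by positivity
          rw [abs_of_nonneg hval]
          simp only [cauchyPDF]
          field_simp
  -- limits
  have hlogtop : Tendsto (fun x : ℝ => Real.log ((1 + x ^ 2) / ((x - a) ^ 2 + γ ^ 2)))
      atTop (𝓝 0) := by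
    have h := (Real.continuousAt_log one_ne_zero).tendsto.comp
      (ratio_tendsto_one a γ hγ tendsto_inv_atTop_zero (eventually_ne_atTop 0))
    simpa [Function.comp_def, Real.log_one] using h
  have hlogbot : Tendsto (fun x : ℝ => Real.log ((1 + x ^ 2) / ((x - a) ^ 2 + γ ^ 2)))
      atBot (𝓝 0) := by
    have h := (Real.continuousAt_log one_ne_zero).tendsto.comp
      (ratio_tendsto_one a γ hγ inv_tendsto_atBot_zero' (eventually_ne_atBot 0))
    simpa [Function.comp_def, Real.log_one] using h
  have hafftop : Tendsto (fun x : ℝ => (x - a) / γ) atTop atTop := by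
    have h := (tendsto_atTop_add_const_right atTop (-a) tendsto_id).atTop_div_const hγ
    simpa [sub_eq_add_neg] using h
  have haffbot : Tendsto (fun x : ℝ => (x - a) / γ) atBot atBot := by
    have h := (tendsto_atBot_add_const_right atBot (-a) tendsto_id).atBot_div_const hγ
    simpa [sub_eq_add_neg] using h
  have harc2top : Tendsto (fun x : ℝ => arctan ((x - a) / γ)) atTop (𝓝 (π / 2)) :=
    (tendsto_nhds_of_tendsto_nhdsWithin tendsto_arctan_atTop).comp hafftop
  have harc2bot : Tendsto (fun x : ℝ => arctan ((x - a) / γ)) atBot (𝓝 (-(π / 2))) :=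
    (tendsto_nhds_of_tendsto_nhdsWithin tendsto_arctan_atBot).comp haffbot
  have harc1top : Tendsto (fun x : ℝ => arctan x) atTop (𝓝 (π / 2)) :=
    tendsto_nhds_of_tendsto_nhdsWithin tendsto_arctan_atTop
  have harc1bot : Tendsto (fun x : ℝ => arctan x) atBot (𝓝 (-(π / 2))) :=
    tendsto_nhds_of_tendsto_nhdsWithin tendsto_arctan_atBot
  have htop : Tendsto F atTop
      (𝓝 ((γ / π) * (A / 2 * 0 + B * (π / 2) + (D / γ) * (π / 2)))) :=
    (((hlogtop.const_mul (A / 2)).add (harc1top.const_mul B)).add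
      (harc2top.const_mul (D / γ))).const_mul (γ / π)
  have hbot : Tendsto F atBot
      (𝓝 ((γ / π) * (A / 2 * 0 + B * (-(π / 2)) + (D / γ) * (-(π / 2))))) :=
    (((hlogbot.const_mul (A / 2)).add (harc1bot.const_mul B)).add
      (harc2bot.const_mul (D / γ))).const_mul (γ / π)
  have key := integral_of_hasDerivAt_of_tendsto hderiv hint hbot htop
  rw [key, hA, hB, hD, hQdef]
  field_simp
  ring

/-- For `X ~ C(a,γ)` the expectation of `Z = X/(1+X²)` equals
`a(a² + γ² + 1 - 2γ) / ((a² + γ² + 1)² - 4γ²)` when `(a,γ) ≠ (0,1)`,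
and equals `0` when `(a,γ) = (0,1)`. -/
theorem cauchy_expectation_self_div_one_add_sq (a γ : ℝ) (hγ : 0 < γ) :
    ((a ≠ 0 ∨ γ ≠ 1) →
      ∫ x : ℝ, (x / (1 + x ^ 2)) * cauchyPDF a γ x =
        a * (a ^ 2 + γ ^ 2 + 1 - 2 * γ) / ((a ^ 2 + γ ^ 2 + 1) ^ 2 - 4 * γ ^ 2)) ∧
    ((a = 0 ∧ γ = 1) → ∫ x : ℝ, (x / (1 + x ^ 2)) * cauchyPDF a γ x = 0) := by
  constructor
  · intro h
    have hQ : 0 < (a ^ 2 + γ ^ 2 + 1) ^ 2 - 4 * γ ^ 2 := by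
      have hfac : (a ^ 2 + γ ^ 2 + 1) ^ 2 - 4 * γ ^ 2 =
          (a ^ 2 + (γ - 1) ^ 2) * (a ^ 2 + (γ + 1) ^ 2) := by ring
      rw [hfac]
      have h2 : (0 : ℝ) < a ^ 2 + (γ + 1) ^ 2 := by positivity
      have h1 : (0 : ℝ) < a ^ 2 + (γ - 1) ^ 2 := by
        rcases h with h | h
        · have : 0 < a ^ 2 := by positivity
          nlinarith [sq_nonneg (γ - 1)]
        · have : γ - 1 ≠ 0 := sub_ne_zero.mpr h
          have : 0 < (γ - 1) ^ 2 := (sq_nonneg _).lt_of_ne' (pow_ne_zero 2 this)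
          nlinarith [sq_nonneg a]
      exact mul_pos h1 h2
    exact cauchy_aux a γ hγ hQ
  · rintro ⟨rfl, rfl⟩
    have hI := MeasureTheory.integral_neg_eq_self
      (fun x : ℝ => (x / (1 + x ^ 2)) * cauchyPDF 0 1 x) volume
    have h2 : ∀ x : ℝ, (-x / (1 + (-x) ^ 2)) * cauchyPDF 0 1 (-x) =
        -((x / (1 + x ^ 2)) * cauchyPDF 0 1 x) := by
      intro x
      simp only [cauchyPDF]
      have h1 : (0:ℝ) < 1 + x ^ 2 := by positivity
      have h2 : (0:ℝ) < (x - 0) ^ 2 + 1 ^ 2 := by positivity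
      have h3 : (0:ℝ) < (-x - 0) ^ 2 + 1 ^ 2 := by positivity
      field_simp
      ring
    simp only [h2] at hI
    rw [integral_neg] at hI
    linarith
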